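/- For every c ∈ ℂ and all f, u, φ ∈ C∞₂π(ℝ,ℂ), the Sturm–Liouville operator A(φ) = 2·c·φ″ + u·φ satisfies the Kirillov–Segal identity: ( f·(Aφ)′ + (3/2)·f′·(Aφ) ) − A( f·φ′ − (1/2)·f′·φ ) = ( f·u′ + 2·f′·u + c·f‴ )·φ. In other words, the natural action L_f(A) = L_f^{3/2}∘A − A∘L_f^{−1/2} of the vector field f·d/dx on Sturm–Liouville operators is the operator of multiplication by the Virasoro coadjoint action f·u′ + 2·f′·u + c·f‴ of f on the quadratic density u·dx². -/

import Mathlib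

open Real
open scoped ContDiff

private lemma smooth_deriv {g : ℝ → ℂ} (hg : ContDiff ℝ ∞ g) :
    ContDiff ℝ ∞ (deriv g) := (contDiff_infty_iff_deriv.mp hg).2

private lemma smooth_diff {g : ℝ → ℂ} (hg : ContDiff ℝ ∞ g) :
    Differentiable ℝ g := (contDiff_infty_iff_deriv.mp hg).1

/-- **The Kirillov–Segal identity.** For every `c ∈ ℂ` and all smooth `2π`-periodic
`f, u, φ : ℝ → ℂ`, the Sturm–Liouville operator `A(φ) = 2·c·φ″ + u·φ`
(mapping `(−1/2)`-densities to `(3/2)`-densities) satisfies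
`L_f^{3/2}(Aφ) − A(L_f^{−1/2}φ) = (f·u′ + 2·f′·u + c·f‴)·φ`:
the natural action of the vector field `f·d/dx` on Sturm–Liouville operators is
multiplication by the Virasoro coadjoint action of `f` on `u·dx²`. -/
theorem kirillov_segal_identity (c : ℂ) (f u φ : ℝ → ℂ)
    (hf : ContDiff ℝ ∞ f) (hfp : Function.Periodic f (2 * π))
    (hu : ContDiff ℝ ∞ u) (hup : Function.Periodic u (2 * π))
    (hφ : ContDiff ℝ ∞ φ) (hφp : Function.Periodic φ (2 * π)) (x : ℝ) :
    (f x * deriv (fun t => 2 * c * deriv (deriv φ) t + u t * φ t) x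
        + (3/2 : ℂ) * deriv f x * (2 * c * deriv (deriv φ) x + u x * φ x))
      - (2 * c * deriv (deriv (fun t => f t * deriv φ t - (1/2 : ℂ) * deriv f t * φ t)) x
        + u x * (f x * deriv φ x - (1/2 : ℂ) * deriv f x * φ x))
      = (f x * deriv u x + 2 * deriv f x * u x + c * deriv (deriv (deriv f)) x) * φ x := by
  have hf1 := smooth_deriv hf
  have hf2 := smooth_deriv hf1
  have hu1 := smooth_deriv hu
  have hφ1 := smooth_deriv hφ
  have hφ2 := smooth_deriv hφ1
  -- first big deriv
  have h1 : deriv (fun t => 2 * c * deriv (deriv φ) t + u t * φ t) x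
      = 2 * c * deriv (deriv (deriv φ)) x + (deriv u x * φ x + u x * deriv φ x) := by
    rw [deriv_fun_add ((smooth_diff hφ2 x).const_mul _)
        ((smooth_diff hu x).fun_mul (smooth_diff hφ x)),
      deriv_const_mul _ (smooth_diff hφ2 x),
      deriv_fun_mul (smooth_diff hu x) (smooth_diff hφ x)]
  -- the inner function and its derivatives
  have hg : (deriv (fun t => f t * deriv φ t - (1/2 : ℂ) * deriv f t * φ t))
      = fun t => (deriv f t * deriv φ t + f t * deriv (deriv φ) t)
        - ((1/2 : ℂ) * deriv (deriv f) t * φ t + (1/2 : ℂ) * deriv f t * deriv φ t) := by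
    funext t
    rw [deriv_fun_sub ((smooth_diff hf t).fun_mul (smooth_diff hφ1 t))
        (((smooth_diff hf1 t).const_mul _).fun_mul (smooth_diff hφ t)),
      deriv_fun_mul (smooth_diff hf t) (smooth_diff hφ1 t),
      deriv_fun_mul ((smooth_diff hf1 t).const_mul _) (smooth_diff hφ t),
      deriv_const_mul _ (smooth_diff hf1 t)]
  have h2 : deriv (deriv (fun t => f t * deriv φ t - (1/2 : ℂ) * deriv f t * φ t)) x
      = (deriv (deriv f) x * deriv φ x + deriv f x * deriv (deriv φ) x
          + (deriv f x * deriv (deriv φ) x + f x * deriv (deriv (deriv φ)) x))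
        - (((1/2 : ℂ) * deriv (deriv (deriv f)) x * φ x
            + (1/2 : ℂ) * deriv (deriv f) x * deriv φ x)
          + ((1/2 : ℂ) * deriv (deriv f) x * deriv φ x
            + (1/2 : ℂ) * deriv f x * deriv (deriv φ) x)) := by
    rw [hg]
    rw [deriv_fun_sub
        (((smooth_diff hf1 x).fun_mul (smooth_diff hφ1 x)).fun_add
          ((smooth_diff hf x).fun_mul (smooth_diff hφ2 x)))
        ((((smooth_diff hf2 x).const_mul _).fun_mul (smooth_diff hφ x)).fun_add
          (((smooth_diff hf1 x).const_mul _).fun_mul (smooth_diff hφ1 x))),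
      deriv_fun_add ((smooth_diff hf1 x).fun_mul (smooth_diff hφ1 x))
        ((smooth_diff hf x).fun_mul (smooth_diff hφ2 x)),
      deriv_fun_add (((smooth_diff hf2 x).const_mul _).fun_mul (smooth_diff hφ x))
        (((smooth_diff hf1 x).const_mul _).fun_mul (smooth_diff hφ1 x)),
      deriv_fun_mul (smooth_diff hf1 x) (smooth_diff hφ1 x),
      deriv_fun_mul (smooth_diff hf x) (smooth_diff hφ2 x),
      deriv_fun_mul ((smooth_diff hf2 x).const_mul _) (smooth_diff hφ x),
      deriv_fun_mul ((smooth_diff hf1 x).const_mul _) (smooth_diff hφ1 x),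
      deriv_const_mul _ (smooth_diff hf2 x),
      deriv_const_mul _ (smooth_diff hf1 x)]
  rw [h1, h2]
  ring
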